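/- (Marginals, Case 3.) Suppose θ₁+θ₂ ≠ θ₁′ and θ₁+θ₂ = θ₂′. Then for every y₁ ∈ (a,b), the marginal CDF F_{Y₁}(y₁) = ∫_a^{y₁} ∫_a^b f(u,v) dv du equals (θ₂/(θ₁+θ₂−θ₁′))·F₀(y₁)^{θ₁′} + ((θ₁−θ₁′)/(θ₁+θ₂−θ₁′))·F₀(y₁)^{θ₁+θ₂}, and for every y₂ ∈ (a,b), the marginal CDF F_{Y₂}(y₂) = ∫_a^b ∫_a^{y₂} f(u,v) dv du equals F₀(y₂)^{θ₁+θ₂}·[1 − θ₁ ln(F₀(y₂))]. -/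

import Mathlib

open MeasureTheory Set


lemma ftc_open {g g' : ℝ → ℝ} {a b A B : ℝ} (hab : a < b)
    (hd : ∀ x ∈ Ioo a b, HasDerivAt g (g' x) x)
    (hc : ContinuousOn g' (Ioo a b))
    (hnn : ∀ x ∈ Ioo a b, 0 ≤ g' x)
    (hA : Filter.Tendsto g (nhdsWithin a (Ioi a)) (nhds A))
    (hB : Filter.Tendsto g (nhdsWithin b (Iio b)) (nhds B)) :
    IntegrableOn g' (Ioo a b) volume ∧ ∫ x in Ioo a b, g' x = B - A := by
  set an : ℕ → ℝ := fun n => a + (b - a) / (n + 2) with han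
  set bn : ℕ → ℝ := fun n => b - (b - a) / (n + 2) with hbn
  have hba : 0 < b - a := sub_pos.2 hab
  have hden : ∀ n : ℕ, (0:ℝ) < (n:ℝ) + 2 := by intro n; positivity
  have h1 : ∀ n, a < an n := fun n => lt_add_of_pos_right a (div_pos hba (hden n))
  have h2 : ∀ n, bn n < b := fun n => sub_lt_self b (div_pos hba (hden n))
  have h3 : ∀ n, an n ≤ bn n := by
    intro n
    have h4 : (b - a) / ((n:ℝ) + 2) ≤ (b - a) / 2 := by
      rw [div_le_div_iff₀ (hden n) two_pos]
      nlinarith [Nat.cast_nonneg (α := ℝ) n]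
    simp only [han, hbn]; linarith
  have hsub : ∀ n, Icc (an n) (bn n) ⊆ Ioo a b := fun n x hx =>
    ⟨lt_of_lt_of_le (h1 n) hx.1, lt_of_le_of_lt hx.2 (h2 n)⟩
  have hIocsub : ∀ n, Ioc (an n) (bn n) ⊆ Ioo a b := fun n x hx => hsub n ⟨hx.1.le, hx.2⟩
  have hden_t : Filter.Tendsto (fun n : ℕ => (n:ℝ) + 2) Filter.atTop Filter.atTop :=
    Filter.tendsto_atTop_add_const_right _ 2 tendsto_natCast_atTop_atTop
  have hquot : Filter.Tendsto (fun n : ℕ => (b - a) / ((n:ℝ) + 2)) Filter.atTop (nhds 0) :=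
    Filter.Tendsto.div_atTop tendsto_const_nhds hden_t
  have hta : Filter.Tendsto an Filter.atTop (nhds a) := by
    simpa using tendsto_const_nhds.add hquot
  have htb : Filter.Tendsto bn Filter.atTop (nhds b) := by
    simpa using tendsto_const_nhds.sub hquot
  have cover : AECover (volume.restrict (Ioo a b)) Filter.atTop
      (fun n => Ioc (an n) (bn n)) := aecover_Ioo_of_Ioc hta htb
  have hint : ∀ n, IntegrableOn g' (Ioc (an n) (bn n)) (volume.restrict (Ioo a b)) := by
    intro n
    rw [IntegrableOn, Measure.restrict_restrict measurableSet_Ioc,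
      inter_eq_self_of_subset_left (hIocsub n)]
    exact ((hc.mono (hsub n)).integrableOn_Icc).mono_set Ioc_subset_Icc_self
  have hftc : ∀ n, ∫ x in (an n)..(bn n), g' x = g (bn n) - g (an n) := by
    intro n
    apply intervalIntegral.integral_eq_sub_of_hasDerivAt
    · intro x hx
      rw [uIcc_of_le (h3 n)] at hx
      exact hd x (hsub n hx)
    · apply ContinuousOn.intervalIntegrable
      rw [uIcc_of_le (h3 n)]
      exact hc.mono (hsub n)
  have hval : ∀ n, ∫ x in Ioc (an n) (bn n), g' x ∂(volume.restrict (Ioo a b)) =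
      g (bn n) - g (an n) := by
    intro n
    rw [Measure.restrict_restrict measurableSet_Ioc, inter_eq_self_of_subset_left (hIocsub n),
      ← intervalIntegral.integral_of_le (h3 n), hftc n]
  have htend : Filter.Tendsto
      (fun n => ∫ x in Ioc (an n) (bn n), g' x ∂(volume.restrict (Ioo a b)))
      Filter.atTop (nhds (B - A)) := by
    simp only [hval]
    exact Filter.Tendsto.sub
      (hB.comp (tendsto_nhdsWithin_iff.2 ⟨htb, Filter.Eventually.of_forall h2⟩))
      (hA.comp (tendsto_nhdsWithin_iff.2 ⟨hta, Filter.Eventually.of_forall h1⟩))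
  have hnng : ∀ᵐ x ∂(volume.restrict (Ioo a b)), 0 ≤ g' x :=
    (ae_restrict_iff' measurableSet_Ioo).2 (Filter.Eventually.of_forall hnn)
  have hintg : Integrable g' (volume.restrict (Ioo a b)) :=
    cover.integrable_of_integral_tendsto_of_nonneg_ae _ hint hnng htend
  exact ⟨hintg, cover.integral_eq_of_tendsto _ hintg htend⟩

lemma pow_prim {a b : ℝ} {F₀ f₀ : ℝ → ℝ}
    (hderiv : ∀ y ∈ Ioo a b, HasDerivAt F₀ (f₀ y) y)
    (hf₀cont : ContinuousOn f₀ (Ioo a b))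
    (hf₀nn : ∀ y ∈ Ioo a b, 0 ≤ f₀ y)
    (hF₀pos : ∀ y ∈ Ioo a b, 0 < F₀ y)
    {p : ℝ} (hp : p ≠ 0) {c d A B : ℝ} (hcd : c < d)
    (hsub : Ioo c d ⊆ Ioo a b)
    (hA : Filter.Tendsto (fun x => F₀ x ^ p) (nhdsWithin c (Ioi c)) (nhds A))
    (hB : Filter.Tendsto (fun x => F₀ x ^ p) (nhdsWithin d (Iio d)) (nhds B)) :
    IntegrableOn (fun x => f₀ x * F₀ x ^ (p - 1)) (Ioo c d) volume ∧
      ∫ x in Ioo c d, f₀ x * F₀ x ^ (p - 1) = (B - A) / p := by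
  have hFcont : ContinuousOn F₀ (Ioo a b) := fun x hx => (hderiv x hx).continuousAt.continuousWithinAt
  have h := ftc_open (g := fun x => F₀ x ^ p / p) (g' := fun x => f₀ x * F₀ x ^ (p - 1)) hcd
    (fun x hx => by
      have hx' := hsub hx
      have h1 := ((hderiv x hx').rpow_const (p := p) (Or.inl (hF₀pos x hx').ne')).div_const p
      rw [show f₀ x * p * F₀ x ^ (p - 1) / p = f₀ x * F₀ x ^ (p - 1) by
        rw [mul_right_comm, mul_div_cancel_right₀ _ hp]] at h1
      exact h1)
    ((hf₀cont.mono hsub).mul ((hFcont.mono hsub).rpow_const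
      (fun x hx => Or.inl (hF₀pos x (hsub hx)).ne')))
    (fun x hx => mul_nonneg (hf₀nn x (hsub hx)) (Real.rpow_nonneg (hF₀pos x (hsub hx)).le _))
    (hA.div_const p) (hB.div_const p)
  exact ⟨h.1, h.2.trans (by ring)⟩

lemma log_prim {a b : ℝ} {F₀ f₀ : ℝ → ℝ}
    (hderiv : ∀ y ∈ Ioo a b, HasDerivAt F₀ (f₀ y) y)
    (hf₀cont : ContinuousOn f₀ (Ioo a b))
    (hf₀nn : ∀ y ∈ Ioo a b, 0 ≤ f₀ y)
    (hF₀pos : ∀ y ∈ Ioo a b, 0 < F₀ y)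
    {c d A B : ℝ} (hcd : c < d) (hsub : Ioo c d ⊆ Ioo a b)
    (hA : Filter.Tendsto (fun x => Real.log (F₀ x)) (nhdsWithin c (Ioi c)) (nhds A))
    (hB : Filter.Tendsto (fun x => Real.log (F₀ x)) (nhdsWithin d (Iio d)) (nhds B)) :
    IntegrableOn (fun x => f₀ x / F₀ x) (Ioo c d) volume ∧
      ∫ x in Ioo c d, f₀ x / F₀ x = B - A := by
  have hFcont : ContinuousOn F₀ (Ioo a b) := fun x hx => (hderiv x hx).continuousAt.continuousWithinAt
  exact ftc_open hcd
    (fun x hx => (hderiv x (hsub hx)).log (hF₀pos x (hsub hx)).ne')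
    ((hf₀cont.mono hsub).div (hFcont.mono hsub) (fun x hx => (hF₀pos x (hsub hx)).ne'))
    (fun x hx => div_nonneg (hf₀nn x (hsub hx)) (hF₀pos x (hsub hx)).le)
    hA hB

noncomputable def dprh (a b : ℝ) (F₀ f₀ : ℝ → ℝ) (θ₁ θ₂ θ₁' θ₂' : ℝ) (y₁ y₂ : ℝ) : ℝ :=
  if a < y₁ ∧ y₁ < y₂ ∧ y₂ < b then
    θ₁' * θ₂ * f₀ y₁ * f₀ y₂ * F₀ y₁ ^ (θ₁' - 1) * F₀ y₂ ^ (θ₁ + θ₂ - θ₁' - 1)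
  else if a < y₂ ∧ y₂ < y₁ ∧ y₁ < b then
    θ₁ * θ₂' * f₀ y₁ * f₀ y₂ * F₀ y₁ ^ (θ₁ + θ₂ - θ₂' - 1) * F₀ y₂ ^ (θ₂' - 1)
  else 0

theorem dprh_marginals_case3
    (a b : ℝ) (hab : a < b) (F₀ f₀ : ℝ → ℝ)
    (hderiv : ∀ y ∈ Ioo a b, HasDerivAt F₀ (f₀ y) y)
    (hf₀cont : ContinuousOn f₀ (Ioo a b))
    (hmono : StrictMonoOn F₀ (Ioo a b))
    (hf₀pos : ∀ y ∈ Ioo a b, 0 < f₀ y)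
    (hF₀pos : ∀ y ∈ Ioo a b, 0 < F₀ y)
    (hF₀lt1 : ∀ y ∈ Ioo a b, F₀ y < 1)
    (hFa : Filter.Tendsto F₀ (nhdsWithin a (Ioi a)) (nhds 0))
    (hFb : Filter.Tendsto F₀ (nhdsWithin b (Iio b)) (nhds 1))
    (θ₁ θ₂ θ₁' θ₂' : ℝ) (hθ₁ : 0 < θ₁) (hθ₂ : 0 < θ₂) (hθ₁' : 0 < θ₁') (hθ₂' : 0 < θ₂')
    (hne₁ : θ₁ + θ₂ ≠ θ₁') (heq₂ : θ₁ + θ₂ = θ₂')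
    :
    (∀ y₁ ∈ Ioo a b,
      (∫ u in a..y₁, ∫ v in a..b, dprh a b F₀ f₀ θ₁ θ₂ θ₁' θ₂' u v) =
        θ₂ / (θ₁ + θ₂ - θ₁') * F₀ y₁ ^ θ₁' +
          (θ₁ - θ₁') / (θ₁ + θ₂ - θ₁') * F₀ y₁ ^ (θ₁ + θ₂)) ∧
    (∀ y₂ ∈ Ioo a b,
      (∫ u in a..b, ∫ v in a..y₂, dprh a b F₀ f₀ θ₁ θ₂ θ₁' θ₂' u v) =
        F₀ y₂ ^ (θ₁ + θ₂) * (1 - θ₁ * Real.log (F₀ y₂))) := by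
  subst heq₂
  have hf₀nn : ∀ y ∈ Ioo a b, 0 ≤ f₀ y := fun y hy => (hf₀pos y hy).le
  have hs : (0:ℝ) < θ₁ + θ₂ := by linarith
  have hq : θ₁ + θ₂ - θ₁' ≠ 0 := sub_ne_zero.2 hne₁
  -- limits of powers and logs
  have hlim_a : ∀ p : ℝ, 0 < p →
      Filter.Tendsto (fun x => F₀ x ^ p) (nhdsWithin a (Ioi a)) (nhds 0) := by
    intro p hp
    have h0 : ContinuousAt (fun x : ℝ => x ^ p) 0 :=
      Real.continuousAt_rpow_const 0 p (Or.inr hp.le)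
    have := h0.tendsto.comp hFa
    simpa [Real.zero_rpow hp.ne', Function.comp_def] using this
  have hlim_b : ∀ p : ℝ,
      Filter.Tendsto (fun x => F₀ x ^ p) (nhdsWithin b (Iio b)) (nhds 1) := by
    intro p
    have h1 : ContinuousAt (fun x : ℝ => x ^ p) 1 :=
      Real.continuousAt_rpow_const 1 p (Or.inl one_ne_zero)
    simpa [Real.one_rpow, Function.comp_def] using h1.tendsto.comp hFb
  have hlim_pt : ∀ (p : ℝ) (c : ℝ), c ∈ Ioo a b → ∀ (sset : Set ℝ),
      Filter.Tendsto (fun x => F₀ x ^ p) (nhdsWithin c sset) (nhds (F₀ c ^ p)) := by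
    intro p c hc sset
    exact (((hderiv c hc).continuousAt.rpow_const
      (Or.inl (hF₀pos c hc).ne'))).continuousWithinAt
  have hlog_pt : ∀ c ∈ Ioo a b, ∀ (sset : Set ℝ),
      Filter.Tendsto (fun x => Real.log (F₀ x)) (nhdsWithin c sset) (nhds (Real.log (F₀ c))) := by
    intro c hc sset
    exact ((Real.continuousAt_log (hF₀pos c hc).ne').comp
      (hderiv c hc).continuousAt).continuousWithinAt
  have hlog_b : Filter.Tendsto (fun x => Real.log (F₀ x)) (nhdsWithin b (Iio b)) (nhds 0) := by
    have h1 : ContinuousAt Real.log 1 := Real.continuousAt_log one_ne_zero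
    simpa [Real.log_one, Function.comp_def] using h1.tendsto.comp hFb
  -- master integrals
  have key_a : ∀ p : ℝ, 0 < p → ∀ y ∈ Ioo a b,
      IntegrableOn (fun x => f₀ x * F₀ x ^ (p - 1)) (Ioo a y) volume ∧
      ∫ x in Ioo a y, f₀ x * F₀ x ^ (p - 1) = F₀ y ^ p / p := by
    intro p hp y hy
    have h := pow_prim hderiv hf₀cont hf₀nn hF₀pos hp.ne' hy.1
      (fun x hx => ⟨hx.1, hx.2.trans hy.2⟩) (hlim_a p hp) (hlim_pt p y hy _)
    exact ⟨h.1, h.2.trans (by ring)⟩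
  have key_b : ∀ p : ℝ, p ≠ 0 → ∀ u ∈ Ioo a b,
      IntegrableOn (fun x => f₀ x * F₀ x ^ (p - 1)) (Ioo u b) volume ∧
      ∫ x in Ioo u b, f₀ x * F₀ x ^ (p - 1) = (1 - F₀ u ^ p) / p := by
    intro p hp u hu
    exact pow_prim hderiv hf₀cont hf₀nn hF₀pos hp hu.2
      (fun x hx => ⟨hu.1.trans hx.1, hx.2⟩) (hlim_pt p u hu _) (hlim_b p)
  have key_mid : ∀ p : ℝ, p ≠ 0 → ∀ u y : ℝ, u ∈ Ioo a b → y ∈ Ioo a b → u < y →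
      IntegrableOn (fun x => f₀ x * F₀ x ^ (p - 1)) (Ioo u y) volume ∧
      ∫ x in Ioo u y, f₀ x * F₀ x ^ (p - 1) = (F₀ y ^ p - F₀ u ^ p) / p := by
    intro p hp u y hu hy huy
    exact pow_prim hderiv hf₀cont hf₀nn hF₀pos hp huy
      (fun x hx => ⟨hu.1.trans hx.1, hx.2.trans hy.2⟩) (hlim_pt p u hu _) (hlim_pt p y hy _)
  have key_log : ∀ u ∈ Ioo a b,
      IntegrableOn (fun x => f₀ x / F₀ x) (Ioo u b) volume ∧
      ∫ x in Ioo u b, f₀ x / F₀ x = -Real.log (F₀ u) := by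
    intro u hu
    have h := log_prim hderiv hf₀cont hf₀nn hF₀pos hu.2
      (fun x hx => ⟨hu.1.trans hx.1, hx.2⟩) (hlog_pt u hu _) hlog_b
    exact ⟨h.1, h.2.trans (by ring)⟩
  -- branch descriptions
  have hdprh_snd : ∀ u ∈ Ioo a b, ∀ w ∈ Ioo a b, w ≤ u →
      EqOn (fun v => dprh a b F₀ f₀ θ₁ θ₂ θ₁' (θ₁ + θ₂) u v)
        (fun v => (θ₁ * (θ₁ + θ₂) * f₀ u * F₀ u ^ (-1:ℝ)) *
          (f₀ v * F₀ v ^ ((θ₁ + θ₂) - 1))) (Ioo a w) := by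
    intro u hu w hw hwu v hv
    have h1 : ¬(a < u ∧ u < v ∧ v < b) := by
      rintro ⟨-, h, -⟩; exact absurd h (not_lt.2 (hv.2.le.trans hwu))
    have h2 : a < v ∧ v < u ∧ u < b := ⟨hv.1, lt_of_lt_of_le hv.2 hwu, hu.2⟩
    show dprh a b F₀ f₀ θ₁ θ₂ θ₁' (θ₁ + θ₂) u v = _
    rw [dprh, if_neg h1, if_pos h2, show θ₁ + θ₂ - (θ₁ + θ₂) - 1 = (-1:ℝ) by ring]
    ring
  have hdprh_fst : ∀ u ∈ Ioo a b, ∀ w : ℝ, w ≤ b →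
      EqOn (fun v => dprh a b F₀ f₀ θ₁ θ₂ θ₁' (θ₁ + θ₂) u v)
        (fun v => (θ₁' * θ₂ * f₀ u * F₀ u ^ (θ₁' - 1)) *
          (f₀ v * F₀ v ^ ((θ₁ + θ₂ - θ₁') - 1))) (Ioo u w) := by
    intro u hu w hwb v hv
    have h2 : a < u ∧ u < v ∧ v < b := ⟨hu.1, hv.1, lt_of_lt_of_le hv.2 hwb⟩
    show dprh a b F₀ f₀ θ₁ θ₂ θ₁' (θ₁ + θ₂) u v = _
    rw [dprh, if_pos h2]
    ring
  -- integral of second branch over (a, w)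
  have snd_int : ∀ u ∈ Ioo a b, ∀ w ∈ Ioo a b, w ≤ u →
      IntegrableOn (fun v => dprh a b F₀ f₀ θ₁ θ₂ θ₁' (θ₁ + θ₂) u v) (Ioo a w) volume ∧
      ∫ v in Ioo a w, dprh a b F₀ f₀ θ₁ θ₂ θ₁' (θ₁ + θ₂) u v =
        θ₁ * f₀ u * F₀ u ^ (-1:ℝ) * F₀ w ^ (θ₁ + θ₂) := by
    intro u hu w hw hwu
    have hk := key_a (θ₁ + θ₂) hs w hw
    have hEq := hdprh_snd u hu w hw hwu
    refine ⟨MeasureTheory.IntegrableOn.congr_fun (hk.1.const_mul _) hEq.symm measurableSet_Ioo, ?_⟩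
    rw [setIntegral_congr_fun measurableSet_Ioo hEq, integral_const_mul, hk.2]
    field_simp
  -- integral of first branch over (u, b)
  have fst_tail : ∀ u ∈ Ioo a b,
      IntegrableOn (fun v => dprh a b F₀ f₀ θ₁ θ₂ θ₁' (θ₁ + θ₂) u v) (Ioo u b) volume ∧
      ∫ v in Ioo u b, dprh a b F₀ f₀ θ₁ θ₂ θ₁' (θ₁ + θ₂) u v =
        (θ₁' * θ₂ * f₀ u * F₀ u ^ (θ₁' - 1)) *
          ((1 - F₀ u ^ (θ₁ + θ₂ - θ₁')) / (θ₁ + θ₂ - θ₁')) := by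
    intro u hu
    have hk := key_b (θ₁ + θ₂ - θ₁') hq u hu
    have hEq := hdprh_fst u hu b le_rfl
    refine ⟨MeasureTheory.IntegrableOn.congr_fun (hk.1.const_mul _) hEq.symm measurableSet_Ioo, ?_⟩
    rw [setIntegral_congr_fun measurableSet_Ioo hEq, integral_const_mul, hk.2]
  -- integral of first branch over (u, y)
  have fst_mid : ∀ u y : ℝ, u ∈ Ioo a b → y ∈ Ioo a b → u < y →
      IntegrableOn (fun v => dprh a b F₀ f₀ θ₁ θ₂ θ₁' (θ₁ + θ₂) u v) (Ioo u y) volume ∧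
      ∫ v in Ioo u y, dprh a b F₀ f₀ θ₁ θ₂ θ₁' (θ₁ + θ₂) u v =
        (θ₁' * θ₂ * f₀ u * F₀ u ^ (θ₁' - 1)) *
          ((F₀ y ^ (θ₁ + θ₂ - θ₁') - F₀ u ^ (θ₁ + θ₂ - θ₁')) / (θ₁ + θ₂ - θ₁')) := by
    intro u y hu hy huy
    have hk := key_mid (θ₁ + θ₂ - θ₁') hq u y hu hy huy
    have hEq := hdprh_fst u hu y hy.2.le
    refine ⟨MeasureTheory.IntegrableOn.congr_fun (hk.1.const_mul _) hEq.symm measurableSet_Ioo, ?_⟩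
    rw [setIntegral_congr_fun measurableSet_Ioo hEq, integral_const_mul, hk.2]
  constructor
  · -- first marginal
    intro y₁ hy₁
    have inner1 : ∀ u ∈ Ioo a b,
        (∫ v in a..b, dprh a b F₀ f₀ θ₁ θ₂ θ₁' (θ₁ + θ₂) u v) =
          θ₁ * f₀ u * F₀ u ^ (-1:ℝ) * F₀ u ^ (θ₁ + θ₂) +
          (θ₁' * θ₂ * f₀ u * F₀ u ^ (θ₁' - 1)) *
            ((1 - F₀ u ^ (θ₁ + θ₂ - θ₁')) / (θ₁ + θ₂ - θ₁')) := by
      intro u hu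
      have ha_u : IntervalIntegrable (fun v => dprh a b F₀ f₀ θ₁ θ₂ θ₁' (θ₁ + θ₂) u v)
          volume a u := (intervalIntegrable_iff_integrableOn_Ioc_of_le hu.1.le).2
        ((integrableOn_Ioc_iff_integrableOn_Ioo).2 (snd_int u hu u hu le_rfl).1)
      have hu_b : IntervalIntegrable (fun v => dprh a b F₀ f₀ θ₁ θ₂ θ₁' (θ₁ + θ₂) u v)
          volume u b := (intervalIntegrable_iff_integrableOn_Ioc_of_le hu.2.le).2
        ((integrableOn_Ioc_iff_integrableOn_Ioo).2 (fst_tail u hu).1)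
      rw [← intervalIntegral.integral_add_adjacent_intervals ha_u hu_b,
        intervalIntegral.integral_of_le hu.1.le, integral_Ioc_eq_integral_Ioo,
        intervalIntegral.integral_of_le hu.2.le, integral_Ioc_eq_integral_Ioo,
        (snd_int u hu u hu le_rfl).2, (fst_tail u hu).2]
    have hEq : EqOn (fun u => ∫ v in a..b, dprh a b F₀ f₀ θ₁ θ₂ θ₁' (θ₁ + θ₂) u v)
        (fun u => (θ₁ - θ₁' * θ₂ / (θ₁ + θ₂ - θ₁')) * (f₀ u * F₀ u ^ ((θ₁ + θ₂) - 1)) +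
          (θ₁' * θ₂ / (θ₁ + θ₂ - θ₁')) * (f₀ u * F₀ u ^ (θ₁' - 1))) (Ioo a y₁) := by
      intro u hu'
      have hu : u ∈ Ioo a b := ⟨hu'.1, hu'.2.trans hy₁.2⟩
      have hpos := hF₀pos u hu
      have e1 : F₀ u ^ (-1:ℝ) * F₀ u ^ (θ₁ + θ₂) = F₀ u ^ ((θ₁ + θ₂) - 1) := by
        rw [← Real.rpow_add hpos]; ring_nf
      have e2 : F₀ u ^ (θ₁' - 1) * F₀ u ^ (θ₁ + θ₂ - θ₁') = F₀ u ^ ((θ₁ + θ₂) - 1) := by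
        rw [← Real.rpow_add hpos]; ring_nf
      simp only
      rw [inner1 u hu]
      field_simp
      linear_combination (θ₁ * f₀ u * (θ₁ + θ₂ - θ₁')) * e1 - (θ₁' * θ₂ * f₀ u) * e2
    have k1 := key_a (θ₁ + θ₂) hs y₁ hy₁
    have k2 := key_a θ₁' hθ₁' y₁ hy₁
    rw [intervalIntegral.integral_of_le hy₁.1.le, integral_Ioc_eq_integral_Ioo,
      setIntegral_congr_fun measurableSet_Ioo hEq,
      integral_add (k1.1.const_mul _) (k2.1.const_mul _),
      integral_const_mul, integral_const_mul, k1.2, k2.2]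
    field_simp
    ring
  · -- second marginal
    intro y₂ hy₂
    have inner2_left : ∀ u ∈ Ioo a y₂,
        (∫ v in a..y₂, dprh a b F₀ f₀ θ₁ θ₂ θ₁' (θ₁ + θ₂) u v) =
          θ₁ * f₀ u * F₀ u ^ (-1:ℝ) * F₀ u ^ (θ₁ + θ₂) +
          (θ₁' * θ₂ * f₀ u * F₀ u ^ (θ₁' - 1)) *
            ((F₀ y₂ ^ (θ₁ + θ₂ - θ₁') - F₀ u ^ (θ₁ + θ₂ - θ₁')) / (θ₁ + θ₂ - θ₁')) := by
      intro u hu'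
      have hu : u ∈ Ioo a b := ⟨hu'.1, hu'.2.trans hy₂.2⟩
      have ha_u : IntervalIntegrable (fun v => dprh a b F₀ f₀ θ₁ θ₂ θ₁' (θ₁ + θ₂) u v)
          volume a u := (intervalIntegrable_iff_integrableOn_Ioc_of_le hu.1.le).2
        ((integrableOn_Ioc_iff_integrableOn_Ioo).2 (snd_int u hu u hu le_rfl).1)
      have hu_y : IntervalIntegrable (fun v => dprh a b F₀ f₀ θ₁ θ₂ θ₁' (θ₁ + θ₂) u v)
          volume u y₂ := (intervalIntegrable_iff_integrableOn_Ioc_of_le hu'.2.le).2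
        ((integrableOn_Ioc_iff_integrableOn_Ioo).2 (fst_mid u y₂ hu hy₂ hu'.2).1)
      rw [← intervalIntegral.integral_add_adjacent_intervals ha_u hu_y,
        intervalIntegral.integral_of_le hu.1.le, integral_Ioc_eq_integral_Ioo,
        intervalIntegral.integral_of_le hu'.2.le, integral_Ioc_eq_integral_Ioo,
        (snd_int u hu u hu le_rfl).2, (fst_mid u y₂ hu hy₂ hu'.2).2]
    have inner2_right : ∀ u ∈ Ioo y₂ b,
        (∫ v in a..y₂, dprh a b F₀ f₀ θ₁ θ₂ θ₁' (θ₁ + θ₂) u v) =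
          (θ₁ * F₀ y₂ ^ (θ₁ + θ₂)) * (f₀ u / F₀ u) := by
      intro u hu'
      have hu : u ∈ Ioo a b := ⟨hy₂.1.trans hu'.1, hu'.2⟩
      rw [intervalIntegral.integral_of_le hy₂.1.le, integral_Ioc_eq_integral_Ioo,
        (snd_int u hu y₂ hy₂ hu'.1.le).2, Real.rpow_neg_one]
      field_simp
    -- equalities as functions on the two pieces
    have hEqL : EqOn (fun u => ∫ v in a..y₂, dprh a b F₀ f₀ θ₁ θ₂ θ₁' (θ₁ + θ₂) u v)
        (fun u => (θ₁ - θ₁' * θ₂ / (θ₁ + θ₂ - θ₁')) * (f₀ u * F₀ u ^ ((θ₁ + θ₂) - 1)) +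
          (θ₁' * θ₂ * F₀ y₂ ^ (θ₁ + θ₂ - θ₁') / (θ₁ + θ₂ - θ₁')) *
            (f₀ u * F₀ u ^ (θ₁' - 1))) (Ioo a y₂) := by
      intro u hu'
      have hu : u ∈ Ioo a b := ⟨hu'.1, hu'.2.trans hy₂.2⟩
      have hpos := hF₀pos u hu
      have e1 : F₀ u ^ (-1:ℝ) * F₀ u ^ (θ₁ + θ₂) = F₀ u ^ ((θ₁ + θ₂) - 1) := by
        rw [← Real.rpow_add hpos]; ring_nf
      have e2 : F₀ u ^ (θ₁' - 1) * F₀ u ^ (θ₁ + θ₂ - θ₁') = F₀ u ^ ((θ₁ + θ₂) - 1) := by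
        rw [← Real.rpow_add hpos]; ring_nf
      simp only
      rw [inner2_left u hu']
      field_simp
      linear_combination (θ₁ * f₀ u * (θ₁ + θ₂ - θ₁')) * e1 - (θ₁' * θ₂ * f₀ u) * e2
    have hEqR : EqOn (fun u => ∫ v in a..y₂, dprh a b F₀ f₀ θ₁ θ₂ θ₁' (θ₁ + θ₂) u v)
        (fun u => (θ₁ * F₀ y₂ ^ (θ₁ + θ₂)) * (f₀ u / F₀ u)) (Ioo y₂ b) := by
      intro u hu'
      simp only
      rw [inner2_right u hu']
    have k1 := key_a (θ₁ + θ₂) hs y₂ hy₂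
    have k2 := key_a θ₁' hθ₁' y₂ hy₂
    have kl := key_log y₂ hy₂
    have iL : IntervalIntegrable (fun u => ∫ v in a..y₂, dprh a b F₀ f₀ θ₁ θ₂ θ₁' (θ₁ + θ₂) u v)
        volume a y₂ := by
      refine (intervalIntegrable_iff_integrableOn_Ioc_of_le hy₂.1.le).2
        ((integrableOn_Ioc_iff_integrableOn_Ioo).2 ?_)
      exact MeasureTheory.IntegrableOn.congr_fun ((k1.1.const_mul _).add (k2.1.const_mul _)) hEqL.symm measurableSet_Ioo
    have iR : IntervalIntegrable (fun u => ∫ v in a..y₂, dprh a b F₀ f₀ θ₁ θ₂ θ₁' (θ₁ + θ₂) u v)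
        volume y₂ b := by
      refine (intervalIntegrable_iff_integrableOn_Ioc_of_le hy₂.2.le).2
        ((integrableOn_Ioc_iff_integrableOn_Ioo).2 ?_)
      exact MeasureTheory.IntegrableOn.congr_fun (kl.1.const_mul _) hEqR.symm measurableSet_Ioo
    rw [← intervalIntegral.integral_add_adjacent_intervals iL iR,
      intervalIntegral.integral_of_le hy₂.1.le, integral_Ioc_eq_integral_Ioo,
      intervalIntegral.integral_of_le hy₂.2.le, integral_Ioc_eq_integral_Ioo,
      setIntegral_congr_fun measurableSet_Ioo hEqL,
      setIntegral_congr_fun measurableSet_Ioo hEqR,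
      integral_add (k1.1.const_mul _) (k2.1.const_mul _),
      integral_const_mul, integral_const_mul, integral_const_mul, k1.2, k2.2, kl.2]
    have hpos2 := hF₀pos y₂ hy₂
    have e3 : F₀ y₂ ^ (θ₁ + θ₂ - θ₁') * F₀ y₂ ^ θ₁' = F₀ y₂ ^ (θ₁ + θ₂) := by
      rw [← Real.rpow_add hpos2]; ring_nf
    field_simp
    linear_combination (θ₂ * (θ₁ + θ₂)) * e3
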